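/- Let t ∈ P, let s = ψ(t), and set ε_j = b_j − s_j (so ε_j > 0) for each j. Then for every t' ∈ P with t_j ≤ t'_j < t_j + ε_j for all j, one has ψ(t') − t' = ψ(t) − t and L(t') = L(t). -/
import Mathlib
set_option maxHeartbeats 1000000


open scoped BigOperators

/-- One step `s → s'` of the continuous O'Hara algorithm on `ℝ^m`:
for some index `j` with `s_j ≥ b_j`, subtract `b_j` from the `j`-th
coordinate and add `a_{j-1}` to the `(j-1)`-st coordinate
(indices cyclically modulo `m`). -/
def CStep (m : ℕ) [NeZero m] (a b : Fin m → ℝ) (s s' : Fin m → ℝ) : Prop :=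
  ∃ j : Fin m, b j ≤ s j ∧
    ∀ l, s' l = s l + (if l = j - 1 then a (j - 1) else 0)
                    - (if l = j then b j else 0)

/-- Membership in the half-open box `[0,a_1) × ⋯ × [0,a_m)`. -/
def InBox {m : ℕ} (a : Fin m → ℝ) (t : Fin m → ℝ) : Prop :=
  ∀ j, 0 ≤ t j ∧ t j < a j


lemma dirichlet_sim {m : ℕ} [NeZero m] (q : Fin m → ℝ) (hq : ∀ j, 0 < q j)
    {η : ℝ} (hη : 0 < η) :
    ∃ p : Fin m → ℕ, (∀ j, 1 ≤ p j) ∧ ∀ j j', q j * (p j : ℝ) < q j' * (p j' : ℝ) + η := by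
  classical
  have hne : (Finset.univ : Finset (Fin m)).Nonempty := ⟨0, Finset.mem_univ 0⟩
  set Q := ∑ l, q l with hQdef
  have hQ : 0 < Q := Finset.sum_pos (fun l _ => hq l) hne
  have hqQ : ∀ j, q j ≤ Q := fun j =>
    Finset.single_le_sum (f := q) (fun l _ => (hq l).le) (Finset.mem_univ j)
  set M : ℕ := ⌈2 * Q / η⌉₊ + 1 with hMdef
  have hM0 : (0:ℝ) < M := by
    have : 0 < M := Nat.succ_pos _
    exact_mod_cast this
  have hM : 2 * Q < η * M := by
    have h1 : 2 * Q / η ≤ (⌈2 * Q / η⌉₊ : ℝ) := Nat.le_ceil _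
    have h2 : ((⌈2 * Q / η⌉₊ : ℕ) : ℝ) < (M : ℝ) := by
      rw [hMdef]; exact_mod_cast Nat.lt_succ_self _
    have h3 : 2 * Q / η < (M : ℝ) := lt_of_le_of_lt h1 h2
    calc 2 * Q = (2 * Q / η) * η := by field_simp
    _ < (M : ℝ) * η := mul_lt_mul_of_pos_right h3 hη
    _ = η * M := mul_comm _ _
  set g : ℕ → Fin m → ℝ := fun k j => Int.fract ((k : ℝ) * Q / q j) with hgdef
  have hg0 : ∀ k j, 0 ≤ g k j := fun k j => Int.fract_nonneg _
  have hg1 : ∀ k j, g k j < 1 := fun k j => Int.fract_lt_one _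
  have hfb : ∀ (k : ℕ) (j : Fin m), (⌊g k j * M⌋).toNat < M := by
    intro k j
    have h1 : ⌊g k j * M⌋ < (M : ℤ) := by
      apply Int.floor_lt.mpr
      push_cast
      nlinarith [hg1 k j, hg0 k j, hM0]
    have h2 : (0:ℤ) ≤ ⌊g k j * M⌋ :=
      Int.floor_nonneg.mpr (mul_nonneg (hg0 k j) hM0.le)
    omega
  set f : Fin (M ^ m + 1) → (Fin m → Fin M) :=
    fun k j => ⟨(⌊g k.val j * M⌋).toNat, hfb k.val j⟩ with hfdef
  have hcard : Fintype.card (Fin m → Fin M) < Fintype.card (Fin (M ^ m + 1)) := by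
    simp [Fintype.card_fun]
  obtain ⟨x, y, hxy, hfxy⟩ := Fintype.exists_ne_map_eq_of_card_lt f hcard
  have key : ∀ u v : Fin (M ^ m + 1), u.val < v.val → f u = f v →
      ∃ p : Fin m → ℕ, (∀ j, 1 ≤ p j) ∧
        ∀ j j', q j * (p j : ℝ) < q j' * (p j' : ℝ) + η := by
    intro u v huv hfuv
    set K : ℕ := v.val - u.val with hKdef
    have hK1 : 1 ≤ K := by omega
    have hKR : (1:ℝ) ≤ (K:ℝ) := by exact_mod_cast hK1
    have hKQ : (K:ℝ) * Q = (v.val:ℝ) * Q - (u.val:ℝ) * Q := by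
      have h : ((K:ℕ):ℝ) = (v.val:ℝ) - (u.val:ℝ) := by
        rw [hKdef]; push_cast [Nat.cast_sub huv.le]; ring
      rw [h]; ring
    have main : ∀ j, ∃ PJ : ℤ, 0 < PJ ∧
        q j * (PJ:ℝ) * M < (K:ℝ) * Q * M + Q ∧
        (K:ℝ) * Q * M < q j * (PJ:ℝ) * M + Q := by
      intro j
      have hqj := hq j
      have hfl : ⌊g v.val j * M⌋ = ⌊g u.val j * M⌋ := by
        have h := congrFun hfuv j
        have h' : (⌊g u.val j * M⌋).toNat = (⌊g v.val j * M⌋).toNat := by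
          simpa [hfdef] using congrArg Fin.val h
        have h2 : (0:ℤ) ≤ ⌊g u.val j * M⌋ :=
          Int.floor_nonneg.mpr (mul_nonneg (hg0 _ _) hM0.le)
        have h3 : (0:ℤ) ≤ ⌊g v.val j * M⌋ :=
          Int.floor_nonneg.mpr (mul_nonneg (hg0 _ _) hM0.le)
        omega
      have hcastfl : ((⌊g v.val j * M⌋ : ℤ):ℝ) = ((⌊g u.val j * M⌋ : ℤ):ℝ) := by
        exact_mod_cast congrArg (fun z : ℤ => (z:ℝ)) hfl
      have hd1 : (g v.val j - g u.val j) * M < 1 := by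
        have b1 : g v.val j * M < ⌊g v.val j * M⌋ + 1 := Int.lt_floor_add_one _
        have b2 : ((⌊g u.val j * M⌋ : ℤ):ℝ) ≤ g u.val j * M := Int.floor_le _
        nlinarith [b1, b2, hcastfl]
      have hd2 : (g u.val j - g v.val j) * M < 1 := by
        have b1 : g u.val j * M < ⌊g u.val j * M⌋ + 1 := Int.lt_floor_add_one _
        have b2 : ((⌊g v.val j * M⌋ : ℤ):ℝ) ≤ g v.val j * M := Int.floor_le _
        nlinarith [b1, b2, hcastfl]
      have hu : (u.val : ℝ) * Q =
          ((⌊(u.val:ℝ) * Q / q j⌋ : ℤ):ℝ) * q j + g u.val j * q j := by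
        have h := Int.floor_add_fract ((u.val:ℝ) * Q / q j)
        have h2 : (((⌊(u.val:ℝ) * Q / q j⌋ : ℤ):ℝ) + g u.val j) * q j
            = ((u.val:ℝ) * Q / q j) * q j := by
          rw [hgdef]; rw [h]
        rw [div_mul_cancel₀ _ (ne_of_gt hqj)] at h2
        linarith [h2, sq_nonneg (q j)]
      have hv : (v.val : ℝ) * Q =
          ((⌊(v.val:ℝ) * Q / q j⌋ : ℤ):ℝ) * q j + g v.val j * q j := by
        have h := Int.floor_add_fract ((v.val:ℝ) * Q / q j)
        have h2 : (((⌊(v.val:ℝ) * Q / q j⌋ : ℤ):ℝ) + g v.val j) * q j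
            = ((v.val:ℝ) * Q / q j) * q j := by
          rw [hgdef]; rw [h]
        rw [div_mul_cancel₀ _ (ne_of_gt hqj)] at h2
        linarith [h2, sq_nonneg (q j)]
      refine ⟨⌊(v.val:ℝ) * Q / q j⌋ - ⌊(u.val:ℝ) * Q / q j⌋, ?_, ?_, ?_⟩
      case _ =>
        -- positivity
        have hdlt : g v.val j - g u.val j < 1 := by
          linarith [hg1 v.val j, hg0 u.val j]
        have hid : (K:ℝ) * Q =
            ((⌊(v.val:ℝ) * Q / q j⌋ - ⌊(u.val:ℝ) * Q / q j⌋ : ℤ):ℝ) * q j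
              + (g v.val j - g u.val j) * q j := by
          push_cast
          linear_combination hKQ + hv - hu
        have hreal : (0:ℝ) <
            ((⌊(v.val:ℝ) * Q / q j⌋ - ⌊(u.val:ℝ) * Q / q j⌋ : ℤ):ℝ) := by
          nlinarith [hid, hqj, hqQ j, hdlt, hQ,
            mul_nonneg (sub_nonneg.mpr hKR) hQ.le,
            mul_lt_mul_of_pos_right hdlt hqj]
        exact_mod_cast hreal
      case _ =>
        have hid : (K:ℝ) * Q =
            ((⌊(v.val:ℝ) * Q / q j⌋ - ⌊(u.val:ℝ) * Q / q j⌋ : ℤ):ℝ) * q j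
              + (g v.val j - g u.val j) * q j := by
          push_cast
          linear_combination hKQ + hv - hu
        have hidM : (K:ℝ) * Q * M =
            ((⌊(v.val:ℝ) * Q / q j⌋ - ⌊(u.val:ℝ) * Q / q j⌋ : ℤ):ℝ) * q j * M
              + (g v.val j - g u.val j) * M * q j := by
          linear_combination (M:ℝ) * hid
        have t2 := mul_lt_mul_of_pos_right hd2 hqj
        -- t2 : (g u - g v) * M * q j < 1 * q j
        linarith [hidM, t2, hqQ j]
      case _ =>
        have hid : (K:ℝ) * Q =
            ((⌊(v.val:ℝ) * Q / q j⌋ - ⌊(u.val:ℝ) * Q / q j⌋ : ℤ):ℝ) * q j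
              + (g v.val j - g u.val j) * q j := by
          push_cast
          linear_combination hKQ + hv - hu
        have hidM : (K:ℝ) * Q * M =
            ((⌊(v.val:ℝ) * Q / q j⌋ - ⌊(u.val:ℝ) * Q / q j⌋ : ℤ):ℝ) * q j * M
              + (g v.val j - g u.val j) * M * q j := by
          linear_combination (M:ℝ) * hid
        have t1 := mul_lt_mul_of_pos_right hd1 hqj
        linarith [hidM, t1, hqQ j]
    choose PJ hPJpos hPJub hPJlb using main
    refine ⟨fun j => (PJ j).toNat, fun j => ?_, fun j j' => ?_⟩
    · show 1 ≤ (PJ j).toNat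
      have := hPJpos j; omega
    · have hcast : ∀ j0 : Fin m, (((PJ j0).toNat : ℕ) : ℝ) = ((PJ j0 : ℤ):ℝ) := by
        intro j0
        have h := Int.toNat_of_nonneg (hPJpos j0).le
        exact_mod_cast congrArg (fun z : ℤ => (z:ℝ)) h
      show q j * (((PJ j).toNat : ℕ) : ℝ) < q j' * (((PJ j').toNat : ℕ) : ℝ) + η
      rw [hcast j, hcast j']
      have h1 := hPJub j
      have h2 := hPJlb j'
      have h3 : q j * ((PJ j : ℤ):ℝ) * M < (q j' * ((PJ j' : ℤ):ℝ) + η) * M := by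
        linarith [h1, h2, hM]
      exact lt_of_mul_lt_mul_right h3 hM0.le
  rcases lt_trichotomy x.val y.val with h | h | h
  · exact key x y h hfxy
  · exact absurd (Fin.val_injective h) hxy
  · exact key y x h hfxy.symm

lemma ohara_lap {m : ℕ} [NeZero m] (a b : Fin m → ℝ) (ha : ∀ j, 0 < a j) :
    ∀ (k : ℕ) (t : Fin m → ℝ) (n : Fin m → ℕ),
      (∀ j, t j + a j * (n (j+1) : ℝ) - b j * (n j : ℝ) < b j) →
      ∀ s : ℕ → (Fin m → ℝ), s 0 = t →
      (∀ l < k, CStep m a b (s l) (s (l+1))) → k ≤ ∑ j, n j := by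
  intro k
  induction k with
  | zero => intro t n hn s hs0 hsl; exact Nat.zero_le _
  | succ k ih =>
    intro t n hn s hs0 hsl
    subst hs0
    obtain ⟨j0, hbj0, heq⟩ := hsl 0 (Nat.succ_pos k)
    have hnj0 : 1 ≤ n j0 := by
      by_contra hcon
      have h0 : n j0 = 0 := by omega
      have h1 := hn j0
      rw [h0] at h1
      have h2 : (0:ℝ) ≤ a j0 * (n (j0+1) : ℝ) :=
        mul_nonneg (ha j0).le (Nat.cast_nonneg _)
      push_cast at h1
      linarith [hbj0]
    set n1 := Function.update n j0 (n j0 - 1) with hn1def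
    have hiff : ∀ l : Fin m, (l + 1 = j0) ↔ (l = j0 - 1) := fun l => eq_sub_iff_add_eq.symm
    have hcast : ((n j0 - 1 : ℕ) : ℝ) = (n j0 : ℝ) - 1 := by
      push_cast [Nat.cast_sub hnj0]; ring
    have hstab1 : ∀ l, s 1 l + a l * (n1 (l+1) : ℝ) - b l * (n1 l : ℝ) < b l := by
      intro l
      have H := hn l
      have hupd1 : ((n1 l : ℕ) : ℝ) = if l = j0 then ((n j0 : ℝ) - 1) else ((n l : ℕ) : ℝ) := by
        by_cases h : l = j0
        · simp [hn1def, Function.update_apply, h, hcast]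
        · simp [hn1def, Function.update_apply, h]
      have hupd2 : ((n1 (l+1) : ℕ) : ℝ) =
          if l = j0 - 1 then ((n j0 : ℝ) - 1) else ((n (l+1) : ℕ) : ℝ) := by
        by_cases h : l = j0 - 1
        · have h3 : l + 1 = j0 := (hiff l).mpr h
          simp [hn1def, Function.update_apply, h3, h, hcast]
        · have h3 : ¬(l + 1 = j0) := fun hh => h ((hiff l).mp hh)
          simp [hn1def, Function.update_apply, h3, h]
      have heql := heq l
      rw [show (0:ℕ) + 1 = 1 from rfl] at heql
      rw [heql, hupd1, hupd2]
      split_ifs with h2 h1 h1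
      · -- l = j0 - 1 and l = j0
        have h3 : l + 1 = j0 := (hiff l).mpr h2
        subst h1
        rw [h3] at H
        rw [← h2]
        linarith [H]
      · -- l = j0 - 1, l ≠ j0
        have h3 : l + 1 = j0 := (hiff l).mpr h2
        subst h2
        rw [h3] at H
        linarith [H]
      · -- l ≠ j0 - 1, l = j0
        subst h1
        linarith [H]
      · linarith [H]
    have hk : k ≤ ∑ j, n1 j := by
      apply ih (s 1) n1 hstab1 (fun l => s (l + 1)) rfl
      intro l hl
      exact hsl (l + 1) (by omega)
    have e1 : ∑ j, n1 j = (n j0 - 1) + ∑ x ∈ Finset.univ.erase j0, n x := by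
      rw [hn1def, Finset.sum_update_of_mem (Finset.mem_univ j0), ← Finset.erase_eq]
    have e2 : n j0 + ∑ x ∈ Finset.univ.erase j0, n x = ∑ j, n j :=
      Finset.add_sum_erase Finset.univ n (Finset.mem_univ j0)
    omega

lemma ohara_terminates {m : ℕ} [NeZero m] (i a b : Fin m → ℝ)
    (hi : ∀ j, 0 < i j) (ha : ∀ j, 0 < a j) (hb : ∀ j, 0 < b j)
    (hiab : ∀ j, i j * a j = i (j + 1) * b (j + 1))
    (t : Fin m → ℝ) (ht : InBox a t) :
    ∃ (s : ℕ → Fin m → ℝ) (k : ℕ), s 0 = t ∧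
      (∀ l < k, CStep m a b (s l) (s (l+1))) ∧ (∀ j, s k j < b j) := by
  classical
  have hne : (Finset.univ : Finset (Fin m)).Nonempty := ⟨0, Finset.mem_univ 0⟩
  set η : ℝ := Finset.univ.inf' hne (fun j => i j * (a j - t j)) with hηdef
  have hη : 0 < η := by
    rw [hηdef, Finset.lt_inf'_iff]
    exact fun j _ => mul_pos (hi j) (sub_pos.mpr (ht j).2)
  obtain ⟨p, hp1, hD⟩ := dirichlet_sim (fun j => i j * b j)
    (fun j => mul_pos (hi j) (hb j)) hη
  set n : Fin m → ℕ := fun j => p j - 1 with hndef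
  have hcast : ∀ j, ((n j : ℕ) : ℝ) = (p j : ℝ) - 1 := by
    intro j
    rw [hndef]
    push_cast [Nat.cast_sub (hp1 j)]
    ring
  have hstab : ∀ j, t j + a j * (n (j+1) : ℝ) - b j * (n j : ℝ) < b j := by
    intro j
    rw [hcast j, hcast (j+1)]
    have hE : i (j+1) * b (j+1) * ((p (j+1) : ℕ) : ℝ) < i j * b j * ((p j : ℕ) : ℝ) + η :=
      hD (j+1) j
    have hE' : i j * a j * ((p (j+1) : ℕ) : ℝ) < i j * b j * ((p j : ℕ) : ℝ) + η := by
      rw [hiab j]; exact hE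
    have hμ : η ≤ i j * (a j - t j) := by
      rw [hηdef]; exact Finset.inf'_le _ (Finset.mem_univ j)
    have h2 : i j * (t j + a j * ((p (j+1) : ℝ) - 1) - b j * ((p j : ℝ) - 1)) < i j * b j := by
      nlinarith [hE', hμ]
    exact lt_of_mul_lt_mul_left h2 (hi j).le
  set T0 : ℕ := ∑ j, n j with hT0def
  -- greedy step function
  set F : (Fin m → ℝ) → (Fin m → ℝ) := fun y =>
    if h : ∃ j, b j ≤ y j then
      (fun l => y l + (if l = Classical.choose h - 1 then a (Classical.choose h - 1) else 0)
                    - (if l = Classical.choose h then b (Classical.choose h) else 0))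
    else y with hFdef
  have hCStep : ∀ y : Fin m → ℝ, (∃ j, b j ≤ y j) → CStep m a b y (F y) := by
    intro y h
    rw [hFdef]
    simp only [dif_pos h]
    exact ⟨Classical.choose h, Classical.choose_spec h, fun l => rfl⟩
  set s : ℕ → Fin m → ℝ := fun l => F^[l] t with hsdef
  have hs0 : s 0 = t := rfl
  have hssucc : ∀ l, s (l + 1) = F (s l) := by
    intro l
    rw [hsdef]
    exact Function.iterate_succ_apply' F l t
  have hex : ∃ l, ∀ j, s l j < b j := by
    by_contra hc
    push_neg at hc
    have hc' : ∀ l, ∃ j, b j ≤ s l j := by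
      intro l
      obtain ⟨j, hj⟩ := hc l
      exact ⟨j, hj⟩
    have hleg : ∀ l < T0 + 1, CStep m a b (s l) (s (l+1)) := by
      intro l _
      rw [hssucc l]
      exact hCStep _ (hc' l)
    have := ohara_lap a b ha (T0 + 1) t n hstab s hs0 hleg
    omega
  have k0 := Nat.find hex
  refine ⟨s, Nat.find hex, hs0, ?_, Nat.find_spec hex⟩
  intro l hl
  have hnn : ¬ (∀ j, s l j < b j) := Nat.find_min hex hl
  push_neg at hnn
  obtain ⟨j, hj⟩ := hnn
  rw [hssucc l]
  exact hCStep _ ⟨j, hj⟩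

/-- local constancy of `t ↦ ψ(t) - t` and of `L`: if `s = ψ(t)`,
`ε_j = b_j - s_j`, and `t' ∈ P` satisfies `t_j ≤ t'_j < t_j + ε_j` for all
`j`, then `ψ(t') - t' = ψ(t) - t` and `L(t') = L(t)`.  Here `ψ t` and `L t`
are the common end and length of all maximal rewrite sequences from `t`. -/
theorem ohara_local_constancy {m : ℕ} [NeZero m] (i a b : Fin m → ℝ)
    (hi : ∀ j, 0 < i j) (ha : ∀ j, 0 < a j) (hb : ∀ j, 0 < b j)
    (hiab : ∀ j, i j * a j = i (j + 1) * b (j + 1))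
    (psi : (Fin m → ℝ) → (Fin m → ℝ)) (L : (Fin m → ℝ) → ℕ)
    (hpsiL : ∀ t, InBox a t → ∀ (s : ℕ → Fin m → ℝ) (k : ℕ), s 0 = t →
      (∀ l < k, CStep m a b (s l) (s (l + 1))) → (∀ j, s k j < b j) →
      psi t = s k ∧ L t = k)
    (t : Fin m → ℝ) (ht : InBox a t)
    (t' : Fin m → ℝ) (ht' : InBox a t')
    (htt' : ∀ j, t j ≤ t' j ∧ t' j < t j + (b j - psi t j)) :
    (∀ j, psi t' j - t' j = psi t j - t j) ∧ L t' = L t := by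
  obtain ⟨s, k, hs0, hleg, hnf⟩ := ohara_terminates i a b hi ha hb hiab t ht
  obtain ⟨hpsit, hLt⟩ := hpsiL t ht s k hs0 hleg hnf
  set s' : ℕ → Fin m → ℝ := fun l j => s l j + (t' j - t j) with hs'def
  have hs'0 : s' 0 = t' := by
    funext j
    rw [hs'def]
    simp only [hs0]
    ring
  have hleg' : ∀ l < k, CStep m a b (s' l) (s' (l + 1)) := by
    intro l hl
    obtain ⟨j0, hb0, he⟩ := hleg l hl
    refine ⟨j0, ?_, ?_⟩
    · have hd := (htt' j0).1
      show b j0 ≤ s l j0 + (t' j0 - t j0)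
      linarith
    · intro l'
      show s (l+1) l' + (t' l' - t l') = s l l' + (t' l' - t l') + _ - _
      rw [he l']
      ring
  have hnf' : ∀ j, s' k j < b j := by
    intro j
    have h2 := (htt' j).2
    have hp : psi t j = s k j := congrFun hpsit j
    show s k j + (t' j - t j) < b j
    linarith
  obtain ⟨hpsit', hLt'⟩ := hpsiL t' ht' s' k hs'0 hleg' hnf'
  constructor
  · intro j
    have h1 : psi t' j = s k j + (t' j - t j) := congrFun hpsit' j
    have h2 : psi t j = s k j := congrFun hpsit j
    rw [h1, h2]
    ring
  · rw [hLt', hLt]
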